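/- Let ε ≥ 0 and let P and Q be probability measures on a measurable space X such that for every measurable set A, Q(A) ≤ e^ε·P(A) and P(A) ≤ e^ε·Q(A). Fix k ≥ 1 and i ∈ {0, 1, …, ⌊k/2⌋}, and set δ_i = ( Σ_{l=0}^{i−1} C(k,l)·( e^{(k−l)ε} − e^{(k−2i+l)ε} ) ) / (1 + e^ε)^k. Then the k-fold product measures satisfy, for every measurable set A ⊆ X^k, Q^{⊗k}(A) ≤ e^{(k−2i)ε}·P^{⊗k}(A) + δ_i. -/

import Mathlib

open MeasureTheory Finset
open scoped ENNReal

noncomputable def phiB (p q M m : ℝ) (n : ℕ) (c a : ℝ) : ℝ :=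
  ∑ j ∈ Finset.range (n + 1),
    (n.choose j : ℝ) * p ^ j * q ^ (n - j) * max (c * (M ^ j * m ^ (n - j)) - a) 0

lemma phiB_nonneg {p q M m : ℝ} (hp : 0 ≤ p) (hq : 0 ≤ q) (n : ℕ) (c a : ℝ) :
    0 ≤ phiB p q M m n c a := by
  refine Finset.sum_nonneg fun j _ => ?_
  have : (0:ℝ) ≤ (n.choose j : ℝ) * p ^ j * q ^ (n - j) := by positivity
  exact mul_nonneg this (le_max_right _ _)

lemma mul_phiB_div {p q M m : ℝ} (n : ℕ) {c : ℝ} (hc : 0 < c) (a : ℝ) :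
    c * phiB p q M m n 1 (a / c) = phiB p q M m n c a := by
  unfold phiB
  rw [Finset.mul_sum]
  refine Finset.sum_congr rfl fun j _ => ?_
  rw [one_mul]
  have h1 : c * max (M ^ j * m ^ (n - j) - a / c) 0
      = max (c * (M ^ j * m ^ (n - j)) - a) 0 := by
    rw [mul_max_of_nonneg _ _ hc.le, mul_zero, mul_sub, mul_div_cancel₀ _ hc.ne']
  rw [← mul_assoc, ← h1]
  ring

lemma chord_term {m M c u a : ℝ} (hm : 0 ≤ m) (hc1 : m ≤ c) (hc2 : c ≤ M) (hu : 0 ≤ u) :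
    (M - m) * max (c * u - a) 0
      ≤ (M - c) * max (m * u - a) 0 + (c - m) * max (M * u - a) 0 := by
  rcases le_or_gt (c * u) a with h | h
  · rw [max_eq_right (by linarith : c * u - a ≤ 0), mul_zero]
    have h1 : (0:ℝ) ≤ (M - c) * max (m * u - a) 0 :=
      mul_nonneg (by linarith) (le_max_right _ _)
    have h2 : (0:ℝ) ≤ (c - m) * max (M * u - a) 0 :=
      mul_nonneg (by linarith) (le_max_right _ _)
    linarith
  · rw [max_eq_left (by linarith : (0:ℝ) ≤ c * u - a)]
    have h1 : (M - c) * (m * u - a) ≤ (M - c) * max (m * u - a) 0 :=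
      mul_le_mul_of_nonneg_left (le_max_left _ _) (by linarith)
    have h2 : (c - m) * (M * u - a) ≤ (c - m) * max (M * u - a) 0 :=
      mul_le_mul_of_nonneg_left (le_max_left _ _) (by linarith)
    nlinarith

lemma phiB_chord {p q M m : ℝ} (hp : 0 ≤ p) (hq : 0 ≤ q) (hm : 0 ≤ m) (hmM : m < M)
    (n : ℕ) {c : ℝ} (a : ℝ) (hc1 : m ≤ c) (hc2 : c ≤ M) :
    phiB p q M m n c a
      ≤ ((M - c) * phiB p q M m n m a + (c - m) * phiB p q M m n M a) / (M - m) := by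
  rw [le_div_iff₀ (by linarith : (0:ℝ) < M - m)]
  unfold phiB
  rw [Finset.sum_mul, Finset.mul_sum, Finset.mul_sum, ← Finset.sum_add_distrib]
  refine Finset.sum_le_sum fun j _ => ?_
  have hw : (0:ℝ) ≤ (n.choose j : ℝ) * p ^ j * q ^ (n - j) := by positivity
  have hu : (0:ℝ) ≤ M ^ j * m ^ (n - j) := mul_nonneg (pow_nonneg (hm.trans hmM.le) j) (pow_nonneg hm _)
  have := chord_term (m := m) (M := M) (c := c) (u := M ^ j * m ^ (n - j)) (a := a) hm hc1 hc2 hu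
  calc (n.choose j : ℝ) * p ^ j * q ^ (n - j) * max (c * (M ^ j * m ^ (n - j)) - a) 0 * (M - m)
      = ((n.choose j : ℝ) * p ^ j * q ^ (n - j)) * ((M - m) * max (c * (M ^ j * m ^ (n - j)) - a) 0) := by ring
    _ ≤ ((n.choose j : ℝ) * p ^ j * q ^ (n - j)) * ((M - c) * max (m * (M ^ j * m ^ (n - j)) - a) 0 + (c - m) * max (M * (M ^ j * m ^ (n - j)) - a) 0) :=
        mul_le_mul_of_nonneg_left this hw
    _ = (M - c) * ((n.choose j : ℝ) * p ^ j * q ^ (n - j) * max (m * (M ^ j * m ^ (n - j)) - a) 0)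
        + (c - m) * ((n.choose j : ℝ) * p ^ j * q ^ (n - j) * max (M * (M ^ j * m ^ (n - j)) - a) 0) := by ring

lemma pascal_sum (p q : ℝ) (n : ℕ) (v : ℕ → ℝ) :
    q * (∑ j ∈ range (n+1), (n.choose j : ℝ) * p ^ j * q ^ (n - j) * v j)
      + p * (∑ j ∈ range (n+1), (n.choose j : ℝ) * p ^ j * q ^ (n - j) * v (j+1))
    = ∑ j ∈ range (n+2), ((n+1).choose j : ℝ) * p ^ j * q ^ (n+1-j) * v j := by
  have hR : ∑ j ∈ range (n+2), ((n+1).choose j : ℝ) * p ^ j * q ^ (n+1-j) * v j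
      = ∑ j ∈ range (n+1), ((n+1).choose (j+1) : ℝ) * p ^ (j+1) * q ^ (n-j) * v (j+1)
        + q ^ (n+1) * v 0 := by
    rw [Finset.sum_range_succ' (fun j => ((n+1).choose j : ℝ) * p ^ j * q ^ (n+1-j) * v j) (n+1)]
    simp [Nat.succ_sub_succ]
  have hsplit : ∀ j ∈ range (n+1), ((n+1).choose (j+1) : ℝ) * p ^ (j+1) * q ^ (n-j) * v (j+1)
      = (n.choose j : ℝ) * p ^ (j+1) * q ^ (n-j) * v (j+1)
        + (n.choose (j+1) : ℝ) * p ^ (j+1) * q ^ (n-j) * v (j+1) := by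
    intro j _; rw [Nat.choose_succ_succ]; push_cast; ring
  rw [hR, Finset.sum_congr rfl hsplit, Finset.sum_add_distrib]
  have h1 : ∑ j ∈ range (n+1), (n.choose j : ℝ) * p ^ (j+1) * q ^ (n-j) * v (j+1)
      = p * ∑ j ∈ range (n+1), (n.choose j : ℝ) * p ^ j * q ^ (n-j) * v (j+1) := by
    rw [Finset.mul_sum]; exact Finset.sum_congr rfl fun j _ => by ring
  have h2 : ∑ j ∈ range (n+1), (n.choose (j+1) : ℝ) * p ^ (j+1) * q ^ (n-j) * v (j+1)
        + q ^ (n+1) * v 0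
      = q * ∑ j ∈ range (n+1), (n.choose j : ℝ) * p ^ j * q ^ (n-j) * v j := by
    rw [Finset.sum_range_succ' (fun j => (n.choose j : ℝ) * p ^ j * q ^ (n-j) * v j) n,
      mul_add, Finset.mul_sum]
    rw [Finset.sum_range_succ]
    simp only [Nat.choose_succ_self, Nat.cast_zero, zero_mul, add_zero, Nat.choose_zero_right,
      Nat.cast_one, one_mul, pow_zero, Nat.sub_zero]
    congr 1
    · refine Finset.sum_congr rfl fun j hj => ?_
      have hj' : j < n := Finset.mem_range.mp hj
      have : n - j = (n - (j+1)) + 1 := by omega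
      rw [this, pow_succ]; ring
    · rw [pow_succ]; ring
  linarith [h1, h2]

lemma key_induction {X : Type*} [MeasurableSpace X] (P Q : Measure X)
    [IsProbabilityMeasure P] [IsProbabilityMeasure Q]
    {F : X → ℝ} (hFm : Measurable F) {m M : ℝ} (hm : 0 < m) (hmM : m < M)
    (hm1 : m ≤ 1) (h1M : 1 ≤ M)
    (hF1 : ∀ x, m ≤ F x) (hF2 : ∀ x, F x ≤ M)
    (hQ : Q = P.withDensity fun x => ENNReal.ofReal (F x))
    (hint : ∫ x, F x ∂P = 1) :
    ∀ n : ℕ, ∀ a : ℝ, 0 ≤ a → ∀ A : Set (Fin n → X), MeasurableSet A →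
      (Measure.pi fun _ : Fin n => Q) A
        ≤ ENNReal.ofReal a * (Measure.pi fun _ : Fin n => P) A
          + ENNReal.ofReal (phiB ((1-m)/(M-m)) ((M-1)/(M-m)) M m n 1 a) := by
  have hMm : (0:ℝ) < M - m := by linarith
  set p : ℝ := (1 - m) / (M - m) with hpdef
  set q : ℝ := (M - 1) / (M - m) with hqdef
  have hp : 0 ≤ p := div_nonneg (by linarith) hMm.le
  have hq : 0 ≤ q := div_nonneg (by linarith) hMm.le
  have hFi : Integrable F P := by
    refine Integrable.mono' (integrable_const M) hFm.aestronglyMeasurable ?_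
    refine Filter.Eventually.of_forall fun x => ?_
    rw [Real.norm_eq_abs, abs_of_pos (lt_of_lt_of_le hm (hF1 x))]
    exact hF2 x
  intro n
  induction n with
  | zero =>
    intro a ha A hA
    rw [Measure.pi_of_empty (fun _ : Fin 0 => Q), Measure.pi_of_empty (fun _ : Fin 0 => P)]
    have hphi : phiB p q M m 0 1 a = max (1 - a) 0 := by
      simp [phiB]
    rw [hphi, Measure.dirac_apply' _ hA]
    by_cases hx : (isEmptyElim : ∀ i : Fin 0, X) ∈ A
    · simp only [Set.indicator_of_mem hx, Pi.one_apply, mul_one]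
      have hreal : (1:ℝ) ≤ a + max (1 - a) 0 := by
        have := le_max_left (1 - a) (0:ℝ); linarith
      rw [← ENNReal.ofReal_one]
      refine le_trans (ENNReal.ofReal_le_ofReal hreal) ?_
      rw [ENNReal.ofReal_add ha (le_max_right _ _)]
    · simp only [Set.indicator_of_notMem hx]
      exact zero_le ..
  | succ n ih =>
    intro a ha A hA
    set e := MeasurableEquiv.piFinSuccAbove (fun _ : Fin (n+1) => X) 0 with hedef
    have hQmp := measurePreserving_piFinSuccAbove (fun _ : Fin (n+1) => Q) 0
    have hPmp := measurePreserving_piFinSuccAbove (fun _ : Fin (n+1) => P) 0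
    set B : Set (X × (Fin n → X)) := e.symm ⁻¹' A with hBdef
    have hBmeas : MeasurableSet B := e.symm.measurable hA
    have hpre : ∀ C : Set (Fin (n+1) → X), e ⁻¹' (e.symm ⁻¹' C) = C := by
      intro C; ext y; simp
    have hQA : (Measure.pi fun _ : Fin (n+1) => Q) A
        = (Q.prod (Measure.pi fun _ : Fin n => Q)) B := by
      rw [← hQmp.map_eq, MeasurableEquiv.map_apply, hBdef, hpre]
    have hPA : (Measure.pi fun _ : Fin (n+1) => P) A
        = (P.prod (Measure.pi fun _ : Fin n => P)) B := by
      rw [← hPmp.map_eq, MeasurableEquiv.map_apply, hpre]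
    set g : X → ℝ≥0∞ := fun x => (Measure.pi fun _ : Fin n => Q) (Prod.mk x ⁻¹' B) with hgdef
    set gP : X → ℝ≥0∞ := fun x => (Measure.pi fun _ : Fin n => P) (Prod.mk x ⁻¹' B) with hgPdef
    have hgmeas : Measurable g := measurable_measure_prodMk_left hBmeas
    have hgPmeas : Measurable gP := measurable_measure_prodMk_left hBmeas
    have hQB : (Measure.pi fun _ : Fin (n+1) => Q) A = ∫⁻ x, ENNReal.ofReal (F x) * g x ∂P := by
      rw [hQA, Measure.prod_apply hBmeas]
      calc ∫⁻ x, (Measure.pi fun _ : Fin n => Q) (Prod.mk x ⁻¹' B) ∂Q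
          = ∫⁻ x, g x ∂(P.withDensity fun x => ENNReal.ofReal (F x)) := by rw [← hQ]
        _ = ∫⁻ x, ENNReal.ofReal (F x) * g x ∂P := by
            rw [lintegral_withDensity_eq_lintegral_mul _ hFm.ennreal_ofReal hgmeas]; rfl
    have hPB : (Measure.pi fun _ : Fin (n+1) => P) A = ∫⁻ x, gP x ∂P := by
      rw [hPA, Measure.prod_apply hBmeas]
    set Φm : ℝ := phiB p q M m n m a with hPhim
    set ΦM : ℝ := phiB p q M m n M a with hPhiM
    set c₁ : ℝ := (M * Φm - m * ΦM) / (M - m) with hc1def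
    set c₂ : ℝ := (ΦM - Φm) / (M - m) with hc2def
    have hline : ∀ c : ℝ, ((M - c) * Φm + (c - m) * ΦM) / (M - m) = c₁ + c₂ * c := by
      intro c; rw [hc1def, hc2def]; field_simp; ring
    have hLnn : ∀ x, 0 ≤ c₁ + c₂ * F x := by
      intro x
      have h1 := phiB_nonneg (p := p) (q := q) (M := M) (m := m) hp hq n (F x) a
      have h2 := phiB_chord hp hq hm.le hmM n (c := F x) a (hF1 x) (hF2 x)
      rw [hline (F x)] at h2
      linarith
    have hpt : ∀ x, ENNReal.ofReal (F x) * g x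
        ≤ ENNReal.ofReal a * gP x + ENNReal.ofReal (c₁ + c₂ * F x) := by
      intro x
      have hFx : 0 < F x := lt_of_lt_of_le hm (hF1 x)
      have hslice : MeasurableSet (Prod.mk x ⁻¹' B) := hBmeas.preimage measurable_prodMk_left
      have h0 := ih (a / F x) (div_nonneg ha hFx.le) (Prod.mk x ⁻¹' B) hslice
      calc ENNReal.ofReal (F x) * g x
          ≤ ENNReal.ofReal (F x) * (ENNReal.ofReal (a / F x) * gP x
              + ENNReal.ofReal (phiB p q M m n 1 (a / F x))) := mul_le_mul_right h0 _
        _ = (ENNReal.ofReal (F x) * ENNReal.ofReal (a / F x)) * gP x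
              + ENNReal.ofReal (F x) * ENNReal.ofReal (phiB p q M m n 1 (a / F x)) := by
            rw [mul_add, mul_assoc]
        _ = ENNReal.ofReal a * gP x + ENNReal.ofReal (phiB p q M m n (F x) a) := by
            rw [← ENNReal.ofReal_mul hFx.le, ← ENNReal.ofReal_mul hFx.le,
              mul_div_cancel₀ _ hFx.ne', mul_phiB_div n hFx a]
        _ ≤ ENNReal.ofReal a * gP x + ENNReal.ofReal (c₁ + c₂ * F x) := by
            refine add_le_add_right (ENNReal.ofReal_le_ofReal ?_) _
            have h2 := phiB_chord hp hq hm.le hmM n (c := F x) a (hF1 x) (hF2 x)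
            rw [hline (F x)] at h2
            exact h2
    have hIntLine : Integrable (fun x => c₁ + c₂ * F x) P :=
      (integrable_const c₁).add (hFi.const_mul c₂)
    have hIntVal : ∫ x, (c₁ + c₂ * F x) ∂P = c₁ + c₂ := by
      rw [integral_add (integrable_const c₁) (hFi.const_mul c₂), integral_const,
        integral_const_mul, hint, probReal_univ]
      simp
    calc (Measure.pi fun _ : Fin (n+1) => Q) A
        = ∫⁻ x, ENNReal.ofReal (F x) * g x ∂P := hQB
      _ ≤ ∫⁻ x, (ENNReal.ofReal a * gP x + ENNReal.ofReal (c₁ + c₂ * F x)) ∂P :=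
          lintegral_mono hpt
      _ = ENNReal.ofReal a * ∫⁻ x, gP x ∂P + ∫⁻ x, ENNReal.ofReal (c₁ + c₂ * F x) ∂P := by
          rw [lintegral_add_right _ (by fun_prop : Measurable fun x => ENNReal.ofReal (c₁ + c₂ * F x)),
            lintegral_const_mul _ hgPmeas]
      _ = ENNReal.ofReal a * (Measure.pi fun _ : Fin (n+1) => P) A
            + ENNReal.ofReal (c₁ + c₂) := by
          rw [← hPB, ← ofReal_integral_eq_lintegral_ofReal hIntLine
            (Filter.Eventually.of_forall hLnn), hIntVal]
      _ = ENNReal.ofReal a * (Measure.pi fun _ : Fin (n+1) => P) A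
            + ENNReal.ofReal (phiB p q M m (n+1) 1 a) := by
          congr 1
          have hsum : c₁ + c₂ = q * Φm + p * ΦM := by
            rw [hc1def, hc2def, hpdef, hqdef]; field_simp; ring
          rw [hsum]
          congr 1
          set v : ℕ → ℝ := fun j => max (M ^ j * m ^ (n + 1 - j) - a) 0 with hvdef
          have hΦm : Φm = ∑ j ∈ range (n+1), (n.choose j : ℝ) * p ^ j * q ^ (n - j) * v j := by
            rw [hPhim]; unfold phiB
            refine Finset.sum_congr rfl fun j hj => ?_
            have hj' : j ≤ n := Nat.lt_succ_iff.mp (Finset.mem_range.mp hj)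
            have hnj : n + 1 - j = (n - j) + 1 := by omega
            rw [hvdef]; simp only []
            rw [hnj, pow_succ]
            ring_nf
          have hΦM : ΦM = ∑ j ∈ range (n+1), (n.choose j : ℝ) * p ^ j * q ^ (n - j) * v (j+1) := by
            rw [hPhiM]; unfold phiB
            refine Finset.sum_congr rfl fun j hj => ?_
            have hnj : n + 1 - (j + 1) = n - j := by omega
            rw [hvdef]; simp only []
            rw [hnj, pow_succ]
            ring_nf
          rw [hΦm, hΦM, pascal_sum p q n v]
          unfold phiB
          refine (Finset.sum_congr rfl fun j hj => ?_).symm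
          rw [hvdef, one_mul]

lemma phiB_eval {ε : ℝ} (hε : 0 < ε) (k i : ℕ) (hik : i ≤ k) :
    phiB ((1 - Real.exp (-ε)) / (Real.exp ε - Real.exp (-ε)))
         ((Real.exp ε - 1) / (Real.exp ε - Real.exp (-ε)))
         (Real.exp ε) (Real.exp (-ε)) k 1 (Real.exp (((k : ℝ) - 2 * i) * ε))
    = (∑ l ∈ Finset.range i, (k.choose l : ℝ)
          * (Real.exp (((k : ℝ) - l) * ε) - Real.exp (((k : ℝ) - 2 * i + l) * ε)))
        / (1 + Real.exp ε) ^ k := by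
  have hE0 : 0 < Real.exp ε := Real.exp_pos ε
  have hE1 : 1 < Real.exp ε := Real.one_lt_exp_iff.mpr hε
  have h1E : (0:ℝ) < 1 + Real.exp ε := by linarith
  have hm0 : 0 < Real.exp (-ε) := Real.exp_pos _
  have hm1 : Real.exp (-ε) < 1 := by
    rw [← Real.exp_zero]; exact Real.exp_lt_exp.mpr (by linarith)
  have hMm : (0:ℝ) < Real.exp ε - Real.exp (-ε) := by linarith
  have hmul1 : Real.exp (-ε) * Real.exp ε = 1 := by
    rw [← Real.exp_add]; simp
  have hp : (1 - Real.exp (-ε)) / (Real.exp ε - Real.exp (-ε)) = 1 / (1 + Real.exp ε) := by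
    rw [div_eq_div_iff hMm.ne' h1E.ne']; nlinarith [hmul1]
  have hq : (Real.exp ε - 1) / (Real.exp ε - Real.exp (-ε)) = Real.exp ε / (1 + Real.exp ε) := by
    rw [div_eq_div_iff hMm.ne' h1E.ne']; nlinarith [hmul1]
  rw [hp, hq]
  set a : ℝ := Real.exp (((k : ℝ) - 2 * i) * ε) with hadef
  have hval : ∀ j : ℕ, j ≤ k →
      (Real.exp ε) ^ j * (Real.exp (-ε)) ^ (k - j)
        = Real.exp ((2 * (j:ℝ) - k) * ε) := by
    intro j hj
    rw [← Real.exp_nat_mul, ← Real.exp_nat_mul, ← Real.exp_add]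
    congr 1
    rw [Nat.cast_sub hj]; ring
  unfold phiB
  have hsub : Finset.Ico (k + 1 - i) (k + 1) ⊆ Finset.range (k + 1) := by
    intro j hj
    simp only [Finset.mem_Ico, Finset.mem_range] at *
    omega
  have hzero : ∀ j ∈ Finset.range (k + 1), j ∉ Finset.Ico (k + 1 - i) (k + 1) →
      (k.choose j : ℝ) * (1 / (1 + Real.exp ε)) ^ j * (Real.exp ε / (1 + Real.exp ε)) ^ (k - j)
        * max (1 * ((Real.exp ε) ^ j * (Real.exp (-ε)) ^ (k - j)) - a) 0 = 0 := by
    intro j hj hj'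
    simp only [Finset.mem_range, Finset.mem_Ico, not_and, not_lt] at hj hj'
    have hjk : j ≤ k := by omega
    have hji : j + i ≤ k := by omega
    rw [one_mul, hval j hjk]
    have hle : Real.exp ((2 * (j:ℝ) - k) * ε) ≤ a := by
      rw [hadef]
      apply Real.exp_le_exp.mpr
      have h1 : (j:ℝ) + i ≤ k := by exact_mod_cast hji
      nlinarith [hε.le]
    rw [max_eq_right (by linarith), mul_zero]
  rw [← Finset.sum_subset hsub hzero]
  rw [Finset.sum_div]
  refine Finset.sum_nbij' (fun j => k - j) (fun l => k - l) ?_ ?_ ?_ ?_ ?_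
  · intro j hj
    simp only [Finset.mem_Ico] at hj
    simp only [Finset.mem_range]
    omega
  · intro l hl
    simp only [Finset.mem_range] at hl
    simp only [Finset.mem_Ico]
    omega
  · intro j hj
    simp only [Finset.mem_Ico] at hj
    show k - (k - j) = j
    omega
  · intro l hl
    simp only [Finset.mem_range] at hl
    show k - (k - l) = l
    omega
  · intro j hj
    simp only [Finset.mem_Ico] at hj
    show (k.choose j : ℝ) * (1 / (1 + Real.exp ε)) ^ j * (Real.exp ε / (1 + Real.exp ε)) ^ (k - j)
        * max (1 * ((Real.exp ε) ^ j * (Real.exp (-ε)) ^ (k - j)) - a) 0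
      = (k.choose (k - j) : ℝ)
          * (Real.exp (((k:ℝ) - ((k - j : ℕ) : ℝ)) * ε)
              - Real.exp (((k:ℝ) - 2 * i + ((k - j : ℕ) : ℝ)) * ε))
          / (1 + Real.exp ε) ^ k
    have hjk : j ≤ k := by omega
    have hcast : ((k - j : ℕ) : ℝ) = (k:ℝ) - j := Nat.cast_sub hjk
    rw [Nat.choose_symm hjk, hcast, one_mul, hval j hjk]
    have hji : k + 1 ≤ j + i := by omega
    have hji' : (k:ℝ) + 1 ≤ (j:ℝ) + i := by exact_mod_cast hji
    have hle2 : a ≤ Real.exp ((2 * (j:ℝ) - k) * ε) := by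
      rw [hadef]; apply Real.exp_le_exp.mpr; nlinarith [hε.le]
    rw [max_eq_left (by linarith)]
    have hpow : (1 / (1 + Real.exp ε)) ^ j * (Real.exp ε / (1 + Real.exp ε)) ^ (k - j)
        = (Real.exp ε) ^ (k - j) / (1 + Real.exp ε) ^ k := by
      have hkl : j + (k - j) = k := by omega
      rw [div_pow, div_pow, one_pow, div_mul_div_comm, one_mul, ← pow_add, hkl]
    have hEl : (Real.exp ε) ^ (k - j) = Real.exp (((k:ℝ) - j) * ε) := by
      rw [← Real.exp_nat_mul, hcast]
    have hfin : (Real.exp ε) ^ (k - j) * (Real.exp ((2 * (j:ℝ) - k) * ε) - a)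
        = Real.exp (((k:ℝ) - ((k:ℝ) - j)) * ε)
            - Real.exp (((k:ℝ) - 2 * i + ((k:ℝ) - j)) * ε) := by
      rw [hEl, hadef, mul_sub, ← Real.exp_add, ← Real.exp_add]
      congr 1 <;> · congr 1; ring
    calc (k.choose j : ℝ) * (1 / (1 + Real.exp ε)) ^ j * (Real.exp ε / (1 + Real.exp ε)) ^ (k - j)
          * (Real.exp ((2 * (j:ℝ) - k) * ε) - a)
        = (k.choose j : ℝ)
            * ((1 / (1 + Real.exp ε)) ^ j * (Real.exp ε / (1 + Real.exp ε)) ^ (k - j))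
            * (Real.exp ((2 * (j:ℝ) - k) * ε) - a) := by ring
      _ = (k.choose j : ℝ) * ((Real.exp ε) ^ (k - j) / (1 + Real.exp ε) ^ k)
            * (Real.exp ((2 * (j:ℝ) - k) * ε) - a) := by rw [hpow]
      _ = (k.choose j : ℝ) * ((Real.exp ε) ^ (k - j) * (Real.exp ((2 * (j:ℝ) - k) * ε) - a))
            / (1 + Real.exp ε) ^ k := by ring
      _ = (k.choose j : ℝ)
            * (Real.exp (((k:ℝ) - ((k:ℝ) - j)) * ε)
                - Real.exp (((k:ℝ) - 2 * i + ((k:ℝ) - j)) * ε))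
            / (1 + Real.exp ε) ^ k := by rw [hfin]

/-- Homogeneous, non-adaptive, pure-DP case of the optimal composition theorem:
if `Q(A) ≤ e^ε·P(A)` and `P(A) ≤ e^ε·Q(A)` for all measurable `A`, then the
`k`-fold product measures satisfy
`Q^{⊗k}(A) ≤ e^{(k−2i)ε}·P^{⊗k}(A) + δ_i` for every `i ∈ {0, …, ⌊k/2⌋}`, where
`δ_i = (∑_{l<i} C(k,l)·(e^{(k−l)ε} − e^{(k−2i+l)ε})) / (1+e^ε)^k`. -/
theorem optimal_composition_pure_dp
    {X : Type*} [MeasurableSpace X] (P Q : Measure X)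
    [IsProbabilityMeasure P] [IsProbabilityMeasure Q]
    (ε : ℝ) (hε : 0 ≤ ε)
    (hQP : ∀ A : Set X, MeasurableSet A → Q A ≤ ENNReal.ofReal (Real.exp ε) * P A)
    (hPQ : ∀ A : Set X, MeasurableSet A → P A ≤ ENNReal.ofReal (Real.exp ε) * Q A)
    (k : ℕ) (hk : 1 ≤ k) (i : ℕ) (hi : i ≤ k / 2) :
    ∀ A : Set (Fin k → X), MeasurableSet A →
      (Measure.pi fun _ : Fin k => Q) A
        ≤ ENNReal.ofReal (Real.exp (((k : ℝ) - 2 * i) * ε)) * (Measure.pi fun _ : Fin k => P) A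
          + ENNReal.ofReal
              ((∑ l ∈ Finset.range i, (k.choose l : ℝ)
                  * (Real.exp (((k : ℝ) - l) * ε) - Real.exp (((k : ℝ) - 2 * i + l) * ε)))
                / (1 + Real.exp ε) ^ k) := by
  rcases eq_or_lt_of_le hε with hε0 | hε0
  · -- ε = 0 : the two measures are equal
    have hPQ' : P = Q := by
      refine Measure.ext fun s hs => ?_
      refine le_antisymm ?_ ?_
      · have := hPQ s hs
        rwa [← hε0, Real.exp_zero, ENNReal.ofReal_one, one_mul] at this
      · have := hQP s hs
        rwa [← hε0, Real.exp_zero, ENNReal.ofReal_one, one_mul] at this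
    intro A hA
    rw [hPQ', ← hε0, mul_zero, Real.exp_zero, ENNReal.ofReal_one, one_mul]
    exact self_le_add_right _ _
  · -- ε > 0
    intro A hA
    set m : ℝ := Real.exp (-ε) with hmdef
    set M : ℝ := Real.exp ε with hMdef
    have hm : 0 < m := Real.exp_pos _
    have hM0 : 0 < M := Real.exp_pos _
    have hmM : m < M := Real.exp_lt_exp.mpr (by linarith)
    have hm1 : m ≤ 1 := by
      rw [hmdef, ← Real.exp_zero]
      exact Real.exp_le_exp.mpr (by linarith)
    have h1M : 1 ≤ M := by
      rw [hMdef, ← Real.exp_zero]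
      exact Real.exp_le_exp.mpr (by linarith)
    have hmM1 : m * M = 1 := by
      rw [hmdef, hMdef, ← Real.exp_add]
      simp
    -- absolute continuity
    have hQP' : Q ≪ P := by
      refine Measure.AbsolutelyContinuous.mk fun s hs h0 => ?_
      have := hQP s hs
      rw [h0, mul_zero] at this
      exact le_antisymm this (zero_le ..)
    -- a.e. bounds on the Radon-Nikodym derivative
    have hub : Q.rnDeriv P ≤ᵐ[P] fun _ => ENNReal.ofReal M := by
      refine ae_le_of_forall_setLIntegral_le_of_sigmaFinite
        (Measure.measurable_rnDeriv Q P) fun s hs _ => ?_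
      rw [Measure.setLIntegral_rnDeriv hQP']
      calc Q s ≤ ENNReal.ofReal M * P s := hQP s hs
        _ = ∫⁻ _ in s, ENNReal.ofReal M ∂P := by rw [setLIntegral_const]
    have hlb : (fun _ : X => ENNReal.ofReal m) ≤ᵐ[P] Q.rnDeriv P := by
      refine ae_le_of_forall_setLIntegral_le_of_sigmaFinite
        measurable_const fun s hs _ => ?_
      rw [Measure.setLIntegral_rnDeriv hQP', setLIntegral_const]
      calc ENNReal.ofReal m * P s
          ≤ ENNReal.ofReal m * (ENNReal.ofReal M * Q s) :=
            mul_le_mul_right (hPQ s hs) _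
        _ = (ENNReal.ofReal m * ENNReal.ofReal M) * Q s := by rw [mul_assoc]
        _ = Q s := by
            rw [← ENNReal.ofReal_mul hm.le, hmM1, ENNReal.ofReal_one, one_mul]
    set F : X → ℝ := fun x => max m (min M ((Q.rnDeriv P x).toReal)) with hFdef
    have hFm : Measurable F :=
      measurable_const.max (measurable_const.min
        (Measure.measurable_rnDeriv Q P).ennreal_toReal)
    have hF1 : ∀ x, m ≤ F x := fun x => le_max_left _ _
    have hF2 : ∀ x, F x ≤ M := fun x => max_le hmM.le (min_le_left _ _)
    have hae : (fun x => ENNReal.ofReal (F x)) =ᵐ[P] Q.rnDeriv P := by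
      filter_upwards [hub, hlb] with x h1 h2
      have hne : Q.rnDeriv P x ≠ ⊤ := ne_top_of_le_ne_top ENNReal.ofReal_ne_top h1
      have ht1 : (Q.rnDeriv P x).toReal ≤ M := ENNReal.toReal_le_of_le_ofReal hM0.le h1
      have ht2 : m ≤ (Q.rnDeriv P x).toReal := by
        have := ENNReal.toReal_mono hne h2
        rwa [ENNReal.toReal_ofReal hm.le] at this
      show ENNReal.ofReal (max m (min M ((Q.rnDeriv P x).toReal))) = Q.rnDeriv P x
      rw [min_eq_right ht1, max_eq_right ht2]
      exact ENNReal.ofReal_toReal hne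
    have hQd : Q = P.withDensity fun x => ENNReal.ofReal (F x) := by
      rw [withDensity_congr_ae hae, Measure.withDensity_rnDeriv_eq Q P hQP']
    have hint : ∫ x, F x ∂P = 1 := by
      have h1 : ∫⁻ x, ENNReal.ofReal (F x) ∂P = 1 := by
        rw [lintegral_congr_ae hae, Measure.lintegral_rnDeriv hQP', measure_univ]
      rw [integral_eq_lintegral_of_nonneg_ae
        (Filter.Eventually.of_forall fun x => le_trans hm.le (hF1 x))
        hFm.aestronglyMeasurable, h1, ENNReal.toReal_one]
    have hik : i ≤ k := le_trans hi (Nat.div_le_self k 2)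
    have := key_induction P Q hFm hm hmM hm1 h1M hF1 hF2 hQd hint k
      (Real.exp (((k : ℝ) - 2 * i) * ε)) (Real.exp_pos _).le A hA
    rwa [phiB_eval hε0 k i hik] at this
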